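/- Let Δ be the standard k-simplex in ℝ^{k+1} (convex hull of the standard basis vectors) with the Euclidean metric, let ρ be a face of Δ, and let p_ρ : Δ → ρ be the simplicial projection which is the identity on the vertices of ρ and sends all other vertices to a fixed vertex v₀ of ρ. Then for all z, z' ∈ Δ, ‖p_ρ(z) − p_ρ(z')‖ ≤ √(k+1) · ‖z − z'‖. -/

import Mathlib

/-- The simplicial projection of the standard `k`-simplex onto a face `ρ` (spanned by
the vertex set `s`, with base vertex `v₀ ∈ s`) is `√(k+1)`-Lipschitz for the
Euclidean metric. -/
theorem simplicial_projection_lipschitz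
    (k : ℕ) (s : Finset (Fin (k + 1))) (v₀ : Fin (k + 1)) (hv₀ : v₀ ∈ s)
    (p : EuclideanSpace ℝ (Fin (k + 1)) → EuclideanSpace ℝ (Fin (k + 1)))
    (hp : ∀ z i, p z i =
      if i = v₀ then z v₀ + ∑ j ∈ sᶜ, z j else if i ∈ s then z i else 0)
    (z z' : EuclideanSpace ℝ (Fin (k + 1)))
    (hz : (∀ i, 0 ≤ z i) ∧ ∑ i, z i = 1)
    (hz' : (∀ i, 0 ≤ z' i) ∧ ∑ i, z' i = 1) :
    dist (p z) (p z') ≤ Real.sqrt (k + 1) * dist z z' := by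
  set w : Fin (k + 1) → ℝ := fun i => z i - z' i with hw
  have hv₀c : v₀ ∉ sᶜ := by simp [hv₀]
  set t : Finset (Fin (k + 1)) := insert v₀ sᶜ with ht
  have hcoord : ∀ i, p z i - p z' i =
      if i = v₀ then ∑ j ∈ t, w j else if i ∈ s then w i else 0 := by
    intro i
    rw [hp, hp]
    by_cases h1 : i = v₀
    · subst h1
      rw [if_pos rfl, if_pos rfl, if_pos rfl, ht, Finset.sum_insert hv₀c]
      simp only [hw, Finset.sum_sub_distrib]
      ring
    · by_cases h2 : i ∈ s <;> simp [h1, h2, hw]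
  have key : ∑ i, (p z i - p z' i) ^ 2 ≤ (k + 1 : ℝ) * ∑ i, w i ^ 2 := by
    have hsplit : ∑ i, (p z i - p z' i) ^ 2
        = (∑ j ∈ t, w j) ^ 2 + ∑ i ∈ s.erase v₀, w i ^ 2 := by
      rw [← Finset.sum_erase_add _ _ (Finset.mem_univ v₀), hcoord v₀, if_pos rfl,
        add_comm]
      congr 1
      have h0 : ∀ i ∈ Finset.univ.erase v₀,
          (p z i - p z' i) ^ 2 = if i ∈ s then w i ^ 2 else 0 := by
        intro i hi
        rw [hcoord i, if_neg (Finset.ne_of_mem_erase hi)]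
        split_ifs <;> simp
      rw [Finset.sum_congr rfl h0, ← Finset.sum_filter]
      have h1 : (Finset.univ.erase v₀).filter (· ∈ s) = s.erase v₀ := by
        ext i; simp [and_comm]
      rw [h1]
    have hcs : (∑ j ∈ t, w j) ^ 2 ≤ (k + 1 : ℝ) * ∑ j ∈ t, w j ^ 2 := by
      refine le_trans (sq_sum_le_card_mul_sum_sq) ?_
      have hcard : (t.card : ℝ) ≤ (k + 1 : ℝ) := by
        have := Finset.card_le_univ t
        simpa using (Nat.cast_le (α := ℝ)).2 this
      exact mul_le_mul_of_nonneg_right hcard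
        (Finset.sum_nonneg fun j _ => sq_nonneg _)
    have hrest : ∑ i ∈ s.erase v₀, w i ^ 2 ≤ (k + 1 : ℝ) * ∑ i ∈ s.erase v₀, w i ^ 2 := by
      nlinarith [Finset.sum_nonneg (fun i (_ : i ∈ s.erase v₀) => sq_nonneg (w i))]
    have hdisj : Disjoint t (s.erase v₀) := by
      rw [Finset.disjoint_left]
      intro a ha hb
      rcases Finset.mem_insert.1 ha with h | h
      · exact (Finset.ne_of_mem_erase hb) h
      · exact (Finset.mem_compl.1 h) (Finset.mem_of_mem_erase hb)
    have hunion : t ∪ s.erase v₀ = Finset.univ := by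
      ext i
      simp only [Finset.mem_union, ht, Finset.mem_insert, Finset.mem_compl,
        Finset.mem_erase, Finset.mem_univ, iff_true]
      by_cases h1 : i = v₀
      · exact Or.inl (Or.inl h1)
      · by_cases h2 : i ∈ s
        · exact Or.inr ⟨h1, h2⟩
        · exact Or.inl (Or.inr h2)
    calc ∑ i, (p z i - p z' i) ^ 2
        = (∑ j ∈ t, w j) ^ 2 + ∑ i ∈ s.erase v₀, w i ^ 2 := hsplit
      _ ≤ (k + 1 : ℝ) * ∑ j ∈ t, w j ^ 2 + (k + 1 : ℝ) * ∑ i ∈ s.erase v₀, w i ^ 2 := by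
          exact add_le_add hcs hrest
      _ = (k + 1 : ℝ) * ∑ i, w i ^ 2 := by
          rw [← mul_add, ← Finset.sum_union hdisj, hunion]
  have hd1 : dist (p z) (p z') = Real.sqrt (∑ i, (p z i - p z' i) ^ 2) := by
    rw [EuclideanSpace.dist_eq]
    congr 1
    exact Finset.sum_congr rfl fun i _ => by rw [Real.dist_eq, sq_abs]
  have hd2 : dist z z' = Real.sqrt (∑ i, w i ^ 2) := by
    rw [EuclideanSpace.dist_eq]
    congr 1
    exact Finset.sum_congr rfl fun i _ => by rw [Real.dist_eq, sq_abs]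
  rw [hd1, hd2, ← Real.sqrt_mul (by positivity)]
  exact Real.sqrt_le_sqrt key
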